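/- Let (E,𝓛,Ē^{0,-}) be a weakly left-resolving and strongly cofinal labelled space satisfying the standing assumptions, such that {w} ∈ Ē^{0,-} for every w ∈ E^0. If [v]_l is not disagreeable for some v ∈ E^0 and l ≥ 1, then |r({v},α)| = 1 for every α ∈ 𝓛(vE^{≥1}), i.e., every labelled path with source v has a singleton relative range from {v}. -/

import Mathlib

open scoped BigOperators

/-- The `n`-fold concatenation power of a word. -/
def wpow {A : Type*} (β : List A) : ℕ → List A
  | 0 => []
  | n + 1 => β ++ wpow β n

/-- A word is simple if it is not a power of a strictly shorter word. -/
def SimpleWord {A : Type*} (β : List A) : Prop :=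
  β ≠ [] ∧ ¬ ∃ (δ : List A) (n : ℕ), δ ≠ [] ∧ δ.length < β.length ∧ 1 ≤ n ∧ β = wpow δ n

/-- The initial segment `x_{[1,N]}` of an infinite word. -/
def finTake {A : Type*} (x : ℕ → A) (N : ℕ) : List A := List.ofFn (fun i : Fin N => x i)

/-- `x = β^∞`, the periodic infinite word with period `β`. -/
def isPowInf {A : Type*} (β : List A) (x : ℕ → A) : Prop :=
  ∃ h : β ≠ [], ∀ n : ℕ,
    x n = β.get ⟨n % β.length, Nat.mod_lt n (List.length_pos_iff.mpr h)⟩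

/-- A labelled graph: a directed graph together with a surjective labelling of edges. -/
structure LabelledGraph (V : Type*) (Ed : Type*) (A : Type*) where
  src : Ed → V
  rng : Ed → V
  lbl : Ed → A
  lbl_surj : Function.Surjective lbl

/-- A finite path (of length ≥ 1) in a directed graph. -/
structure LabelledGraph.GPath {V Ed A : Type*} (G : LabelledGraph V Ed A) where
  edges : List Ed
  ne : edges ≠ []
  chain : edges.Chain' (fun e f => G.rng e = G.src f)

/-- An infinite path in a directed graph. -/
structure LabelledGraph.GInfPath {V Ed A : Type*} (G : LabelledGraph V Ed A) where
  edges : ℕ → Ed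
  chain : ∀ n, G.rng (edges n) = G.src (edges (n + 1))

namespace LabelledGraph

variable {V Ed A : Type*}

def GPath.src {G : LabelledGraph V Ed A} (p : G.GPath) : V := G.src (p.edges.head p.ne)

def GPath.rng {G : LabelledGraph V Ed A} (p : G.GPath) : V := G.rng (p.edges.getLast p.ne)

def GPath.label {G : LabelledGraph V Ed A} (p : G.GPath) : List A := p.edges.map G.lbl

def GPath.len {G : LabelledGraph V Ed A} (p : G.GPath) : ℕ := p.edges.length

def GInfPath.src {G : LabelledGraph V Ed A} (q : G.GInfPath) : V := G.src (q.edges 0)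

def GInfPath.label {G : LabelledGraph V Ed A} (q : G.GInfPath) : ℕ → A :=
  fun n => G.lbl (q.edges n)

variable (G : LabelledGraph V Ed A)

/-- `α ∈ 𝓛(E^{≥1})`: `α` is the label of some finite path. -/
def IsLabelled (α : List A) : Prop := ∃ p : G.GPath, p.label = α

/-- `s(α)`, the set of sources of paths labelled `α`. -/
def srcSet (α : List A) : Set V := { v | ∃ p : G.GPath, p.label = α ∧ p.src = v }

/-- `r(α)`, the set of ranges of paths labelled `α`. -/
def rngSet (α : List A) : Set V := { v | ∃ p : G.GPath, p.label = α ∧ p.rng = v }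

/-- The relative range `r(S,α)` of `α` with respect to `S`. -/
def relRange (S : Set V) (α : List A) : Set V :=
  { v | ∃ p : G.GPath, p.label = α ∧ p.src ∈ S ∧ p.rng = v }

/-- `x ∈ 𝓛(E^∞)`: the infinite word `x` is the label of some infinite path. -/
def IsInfLabelled (x : ℕ → A) : Prop := ∃ q : G.GInfPath, q.label = x

/-- `s(x)` for an infinite labelled path `x`. -/
def infSrc (x : ℕ → A) : Set V := { v | ∃ q : G.GInfPath, q.label = x ∧ q.src = v }

/-- `𝓛(SE^1)`: labels of edges with source in `S`. -/
def labelsFrom (S : Set V) : Set A := { a | ∃ e : Ed, G.src e ∈ S ∧ G.lbl e = a }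

/-- `𝓛(E^1S)`: labels of edges with range in `S`. -/
def labelsInto (S : Set V) : Set A := { a | ∃ e : Ed, G.rng e ∈ S ∧ G.lbl e = a }

/-- `𝓛(SE^n)`: labels of paths of length `n` with source in `S`. -/
def nLabelsFrom (S : Set V) (n : ℕ) : Set (List A) :=
  { α | ∃ p : G.GPath, p.label = α ∧ p.src ∈ S ∧ p.len = n }

/-- `𝓛(E^{≤l}v)`: labels of paths of length at most `l` with range `v`. -/
def labelsToVtx (l : ℕ) (v : V) : Set (List A) :=
  { α | ∃ p : G.GPath, p.label = α ∧ p.len ≤ l ∧ p.rng = v }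

/-- The generalized vertex `[v]_l`. -/
def genVertex (l : ℕ) (v : V) : Set V := { w | G.labelsToVtx l w = G.labelsToVtx l v }

/-- `Ē^{0,-}`: the collection of all finite unions of generalized vertices. -/
def barE : Set (Set V) :=
  { S | ∃ (l : ℕ) (F : Finset V), 1 ≤ l ∧ S = ⋃ v ∈ F, G.genVertex l v }

/-- An accommodating set for `(E,𝓛)`. -/
structure Accommodating (B : Set (Set V)) : Prop where
  empty_mem : ∅ ∈ B
  relRange_mem : ∀ S ∈ B, ∀ α : List A, G.IsLabelled α → G.relRange S α ∈ B
  inter_mem : ∀ S ∈ B, ∀ T ∈ B, S ∩ T ∈ B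
  union_mem : ∀ S ∈ B, ∀ T ∈ B, S ∪ T ∈ B
  rng_mem : ∀ α : List A, G.IsLabelled α → G.rngSet α ∈ B

/-- `𝓔^{0,-}`: the smallest accommodating set for `(E,𝓛)`. -/
def smallestAcc : Set (Set V) :=
  { S | ∀ B : Set (Set V), G.Accommodating B → S ∈ B }

/-- The labelled space `(E,𝓛,B)` is weakly left-resolving. -/
def WeaklyLeftResolving (B : Set (Set V)) : Prop :=
  ∀ S ∈ B, ∀ T ∈ B, ∀ α : List A, G.IsLabelled α →
    G.relRange S α ∩ G.relRange T α = G.relRange (S ∩ T) α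

/-- Standing assumptions: no sinks, set-finite, receiver set-finite, and
edges are determined by source, range and label. -/
structure StandingAssumptions (B : Set (Set V)) : Prop where
  no_sinks : ∀ v : V, ∃ e : Ed, G.src e = v
  set_finite : ∀ S ∈ B, (G.labelsFrom S).Finite
  receiver_set_finite : ∀ S ∈ B, (G.labelsInto S).Finite
  edge_eq : ∀ e f : Ed, G.src e = G.src f → G.rng e = G.rng f → G.lbl e = G.lbl f → e = f

/-- `(E,𝓛,B)` is strongly cofinal. -/
def StronglyCofinal : Prop :=
  ∀ x : ℕ → A, G.IsInfLabelled x → ∀ l : ℕ, 1 ≤ l → ∀ v : V, ∀ w ∈ G.infSrc x,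
    ∃ N : ℕ, 1 ≤ N ∧ ∃ (m : ℕ) (lds : Fin m → List A),
      (∀ i, G.IsLabelled (lds i)) ∧
      G.relRange (G.genVertex 1 w) (finTake x N) ⊆ ⋃ i, G.relRange (G.genVertex l v) (lds i)

/-- `(E,𝓛,B)` is `l`-cofinal. -/
def LCofinal (l : ℕ) : Prop :=
  ∀ x : ℕ → A, G.IsInfLabelled x → ∀ v : V, ∀ w ∈ G.infSrc x,
    ∃ d : ℕ, l ≤ d ∧ ∃ N : ℕ, 1 ≤ N ∧ ∃ (m : ℕ) (lds : Fin m → List A),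
      (∀ i, G.IsLabelled (lds i)) ∧
      G.relRange (G.genVertex d w) (finTake x N) ⊆ ⋃ i, G.relRange (G.genVertex l v) (lds i)

/-- `(E,𝓛,B)` is cofinal: `l`-cofinal for all `l ≥ L`, for some `L > 0`. -/
def Cofinal : Prop := ∃ L : ℕ, 0 < L ∧ ∀ l : ℕ, L ≤ l → G.LCofinal l

/-- `α` is agreeable for `[v]_l` (the condition only involves `l`):
`α = βα' = α'γ` with `|β| = |γ| ≤ l`. -/
def Agreeable (l : ℕ) (α : List A) : Prop :=
  ∃ β α' γ : List A, G.IsLabelled β ∧ G.IsLabelled α' ∧ G.IsLabelled γ ∧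
    β.length = γ.length ∧ β.length ≤ l ∧ α = β ++ α' ∧ α = α' ++ γ

/-- `α` (a labelled path with `s(α) ∩ [v]_l ≠ ∅`) is disagreeable for `[v]_l`. -/
def DisagreeablePath (l : ℕ) (v : V) (α : List A) : Prop :=
  G.IsLabelled α ∧ (G.srcSet α ∩ G.genVertex l v).Nonempty ∧ ¬ G.Agreeable l α

/-- The generalized vertex `[v]_l` is disagreeable. -/
def DisagreeableVtx (l : ℕ) (v : V) : Prop :=
  ∃ N : ℕ, 0 < N ∧ ∀ n : ℕ, N < n →
    ∃ α : List A, n ≤ α.length ∧ G.DisagreeablePath l v α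

/-- The labelled space is disagreeable. -/
def DisagreeableSpace : Prop :=
  ∀ v : V, ∃ L : ℕ, 0 < L ∧ ∀ l : ℕ, L < l → G.DisagreeableVtx l v

/-- A representation of the labelled space `(E,𝓛,B)` in a C*-algebra `𝔄`. -/
structure Rep (B : Set (Set V)) (𝔄 : Type*) [NonUnitalCStarAlgebra 𝔄] where
  p : Set V → 𝔄
  s : A → 𝔄
  p_empty : p ∅ = 0
  p_proj : ∀ S ∈ B, star (p S) = p S ∧ p S * p S = p S
  s_pisom : ∀ a : A, s a * star (s a) * s a = s a
  p_inter : ∀ S ∈ B, ∀ T ∈ B, p (S ∩ T) = p S * p T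
  p_union : ∀ S ∈ B, ∀ T ∈ B, p (S ∪ T) = p S + p T - p (S ∩ T)
  p_s : ∀ S ∈ B, ∀ a : A, p S * s a = s a * p (G.relRange S [a])
  s_star_s : ∀ a : A, star (s a) * s a = p (G.rngSet [a])
  s_orth : ∀ a b : A, a ≠ b → star (s a) * s b = 0
  p_sum : ∀ S ∈ B, ∀ h : (G.labelsFrom S).Finite, (G.labelsFrom S).Nonempty →
    p S = ∑ a ∈ h.toFinset, s a * p (G.relRange S [a]) * star (s a)

variable {G}

/-- `s_α = s_{α_1} ⋯ s_{α_n}` for a word `α`. -/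
def Rep.sWord {B : Set (Set V)} {𝔄 : Type*} [NonUnitalCStarAlgebra 𝔄]
    (ρ : G.Rep B 𝔄) : List A → 𝔄
  | [] => 0
  | a :: rest => rest.foldl (fun x b => x * ρ.s b) (ρ.s a)

/-- The C*-algebra `𝔄` is generated by the representation `ρ`. -/
def Rep.Generates {B : Set (Set V)} {𝔄 : Type*} [NonUnitalCStarAlgebra 𝔄]
    (ρ : G.Rep B 𝔄) : Prop :=
  closure (↑(NonUnitalStarAlgebra.adjoin ℂ
    (Set.range ρ.s ∪ ρ.p '' B)) : Set 𝔄) = Set.univ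

/-- The representation `ρ` is universal. -/
def Rep.Universal {B : Set (Set V)} {𝔄 : Type*} [NonUnitalCStarAlgebra 𝔄]
    (ρ : G.Rep B 𝔄) : Prop :=
  ∀ (C : Type*) [NonUnitalCStarAlgebra C], ∀ ρ' : G.Rep B C,
    ∃ φ : 𝔄 →⋆ₙₐ[ℂ] C, (∀ a : A, φ (ρ.s a) = ρ'.s a) ∧ ∀ S ∈ B, φ (ρ.p S) = ρ'.p S

end LabelledGraph

/-- A C*-algebra is simple if its only closed two-sided ideals are `{0}` and the
whole algebra. -/
def IsSimpleCStarAlgebra (𝔄 : Type*) [NonUnitalCStarAlgebra 𝔄] : Prop :=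
  ∀ I : TwoSidedIdeal 𝔄, IsClosed (I : Set 𝔄) →
    (I : Set 𝔄) = {0} ∨ (I : Set 𝔄) = Set.univ


/-! ### Auxiliary path API -/

namespace LabelledGraph

variable {V Ed A : Type*} {G : LabelledGraph V Ed A}

/-- The `i`-th edge of a finite path, as a total function. -/
def GPath.eF (p : G.GPath) (i : ℕ) : Ed := p.edges.getD i (p.edges.head p.ne)

def GPath.len_pos (p : G.GPath) : 0 < p.len :=
  List.length_pos_iff.mpr p.ne

lemma GPath.eF_eq_get (p : G.GPath) (i : ℕ) (hi : i < p.len) :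
    p.eF i = p.edges.get ⟨i, hi⟩ := by
  have : i < p.edges.length := hi
  simp [GPath.eF, List.getD_eq_getElem?_getD, List.getElem?_eq_getElem this, List.get_eq_getElem]

lemma GPath.ext' (p q : G.GPath) (h : p.edges = q.edges) : p = q := by
  cases p; cases q; simp_all

lemma GPath.ext_eF (p q : G.GPath) (hlen : p.len = q.len)
    (h : ∀ i, i < p.len → p.eF i = q.eF i) : p = q := by
  refine GPath.ext' p q (List.ext_get hlen ?_)
  intro i h1 h2
  have := h i h1
  rwa [p.eF_eq_get i h1, q.eF_eq_get i h2] at this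

lemma GPath.chainF (p : G.GPath) (i : ℕ) (hi : i + 1 < p.len) :
    G.rng (p.eF i) = G.src (p.eF (i + 1)) := by
  rw [p.eF_eq_get i (lt_trans (Nat.lt_succ_self i) hi), p.eF_eq_get (i+1) hi]
  exact List.isChain_iff_getElem.mp p.chain i (by
    have : i + 1 < p.edges.length := hi
    omega)

lemma GPath.src_eq_eF (p : G.GPath) : p.src = G.src (p.eF 0) := by
  rw [p.eF_eq_get 0 p.len_pos, GPath.src, ← List.get_mk_zero (by exact p.len_pos)]

lemma GPath.rng_eq_eF (p : G.GPath) : p.rng = G.rng (p.eF (p.len - 1)) := by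
  have hp := p.len_pos
  rw [p.eF_eq_get _ (by omega : p.len - 1 < p.len), GPath.rng, List.getLast_eq_getElem]
  rfl

lemma GPath.label_length (p : G.GPath) : p.label.length = p.len := by
  simp [GPath.label, GPath.len]

lemma GPath.label_get (p : G.GPath) (i : ℕ) (hi : i < p.len) :
    p.label.get ⟨i, by rw [p.label_length]; exact hi⟩ = G.lbl (p.eF i) := by
  rw [p.eF_eq_get i hi]
  simp [GPath.label]

/-- Canonical constructor for finite paths from an edge-valued function. -/
def mkPath (f : ℕ → Ed) (n : ℕ) (hn : n ≠ 0)
    (hc : ∀ i, i + 1 < n → G.rng (f i) = G.src (f (i + 1))) : G.GPath where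
  edges := List.ofFn (fun i : Fin n => f i)
  ne := by
    simp only [ne_eq, List.ofFn_eq_nil_iff]
    exact hn
  chain := by
    refine List.isChain_iff_getElem.mpr ?_
    intro i h
    simp only [List.length_ofFn] at h
    simp only [List.getElem_ofFn]
    exact hc i (by omega)

lemma mkPath_len (f : ℕ → Ed) (n : ℕ) (hn : n ≠ 0) (hc) :
    (mkPath (G := G) f n hn hc).len = n := by
  simp [mkPath, GPath.len]

lemma mkPath_eF (f : ℕ → Ed) (n : ℕ) (hn : n ≠ 0) (hc) (i : ℕ) (hi : i < n) :
    (mkPath (G := G) f n hn hc).eF i = f i := by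
  rw [GPath.eF_eq_get _ _ (by rwa [mkPath_len])]
  simp [mkPath]

lemma mkPath_src (f : ℕ → Ed) (n : ℕ) (hn : n ≠ 0) (hc) :
    (mkPath (G := G) f n hn hc).src = G.src (f 0) := by
  rw [GPath.src_eq_eF, mkPath_eF f n hn hc 0 (by omega)]

lemma mkPath_rng (f : ℕ → Ed) (n : ℕ) (hn : n ≠ 0) (hc) :
    (mkPath (G := G) f n hn hc).rng = G.rng (f (n - 1)) := by
  rw [GPath.rng_eq_eF, mkPath_len, mkPath_eF f n hn hc _ (by omega)]

end LabelledGraph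
namespace LabelledGraph

variable {V Ed A : Type*} {G : LabelledGraph V Ed A}

/-- The `n`-th vertex of an infinite path. -/
def GInfPath.vtx (q : G.GInfPath) (n : ℕ) : V := G.src (q.edges n)

lemma GInfPath.vtx_zero (q : G.GInfPath) : q.vtx 0 = q.src := rfl

lemma GInfPath.vtx_succ (q : G.GInfPath) (n : ℕ) : q.vtx (n + 1) = G.rng (q.edges n) :=
  (q.chain n).symm

lemma GInfPath.label_apply (q : G.GInfPath) (n : ℕ) : q.label n = G.lbl (q.edges n) := rfl

/-- Shift an infinite path. -/
def GInfPath.shift (q : G.GInfPath) (m : ℕ) : G.GInfPath where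
  edges := fun n => q.edges (m + n)
  chain := fun n => by
    have := q.chain (m + n)
    simpa [Nat.add_assoc] using this

@[simp] lemma GInfPath.shift_edges (q : G.GInfPath) (m n : ℕ) :
    (q.shift m).edges n = q.edges (m + n) := rfl

@[simp] lemma GInfPath.shift_vtx (q : G.GInfPath) (m n : ℕ) :
    (q.shift m).vtx n = q.vtx (m + n) := rfl

@[simp] lemma GInfPath.shift_label (q : G.GInfPath) (m n : ℕ) :
    (q.shift m).label n = q.label (m + n) := rfl

lemma GInfPath.shift_src (q : G.GInfPath) (m : ℕ) : (q.shift m).src = q.vtx m := rfl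

/-- The finite prefix of an infinite path. -/
def GInfPath.take (q : G.GInfPath) (n : ℕ) (hn : n ≠ 0) : G.GPath :=
  mkPath q.edges n hn (fun i _ => q.chain i)

@[simp] lemma GInfPath.take_len (q : G.GInfPath) (n : ℕ) (hn : n ≠ 0) :
    (q.take n hn).len = n := mkPath_len _ _ _ _

lemma GInfPath.take_eF (q : G.GInfPath) (n : ℕ) (hn : n ≠ 0) (i : ℕ) (hi : i < n) :
    (q.take n hn).eF i = q.edges i := mkPath_eF _ _ _ _ i hi

lemma GInfPath.take_src (q : G.GInfPath) (n : ℕ) (hn : n ≠ 0) :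
    (q.take n hn).src = q.vtx 0 := mkPath_src _ _ _ _

lemma GInfPath.take_rng (q : G.GInfPath) (n : ℕ) (hn : n ≠ 0) :
    (q.take n hn).rng = q.vtx n := by
  rw [GInfPath.take, mkPath_rng]
  have h1 : n - 1 + 1 = n := by omega
  rw [← GInfPath.vtx_succ, h1]

lemma GPath.label_getElem (p : G.GPath) (i : ℕ) (hi : i < p.len) :
    p.label[i]'(by rw [p.label_length]; exact hi) = G.lbl (p.eF i) := by
  have := p.label_get i hi
  simpa [List.get_eq_getElem] using this

lemma GPath.label_eq_ofFn (p : G.GPath) :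
    p.label = List.ofFn (fun i : Fin p.len => G.lbl (p.eF i)) := by
  refine List.ext_getElem (by simp [p.label_length]) ?_
  intro i h1 h2
  rw [List.getElem_ofFn]
  exact p.label_getElem i (by simpa [p.label_length] using h1)

lemma GInfPath.take_label (q : G.GInfPath) (n : ℕ) (hn : n ≠ 0) :
    (q.take n hn).label = List.ofFn (fun i : Fin n => q.label i) := by
  rw [GPath.label_eq_ofFn]
  have hl : (q.take n hn).len = n := q.take_len n hn
  refine List.ext_getElem (by simp [hl]) ?_
  intro i h1 h2
  rw [List.getElem_ofFn, List.getElem_ofFn]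
  rw [GInfPath.label_apply]
  congr 1
  exact q.take_eF n hn i (by simpa [hl] using h1)

/-- Concatenation of a finite path with an infinite path. -/
def GInfPath.comp (p : G.GPath) (q : G.GInfPath) (h : p.rng = q.src) : G.GInfPath where
  edges := fun n => if n < p.len then p.eF n else q.edges (n - p.len)
  chain := by
    intro n
    rcases lt_trichotomy (n + 1) p.len with h1 | h1 | h1
    · simp only [if_pos h1, if_pos (by omega : n < p.len)]
      exact p.chainF n h1
    · show G.rng (if n < p.len then p.eF n else _) = G.src (if n + 1 < p.len then _ else q.edges (n + 1 - p.len))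
      rw [if_pos (by omega : n < p.len), if_neg (by omega : ¬ n + 1 < p.len)]
      have h3 : n = p.len - 1 := by omega
      have hp := p.len_pos
      have h2 : n + 1 - p.len = 0 := by omega
      rw [h2, h3, ← p.rng_eq_eF, h]
      rfl
    · simp only [if_neg (by omega : ¬ n < p.len), if_neg (by omega : ¬ n + 1 < p.len)]
      have h2 : n + 1 - p.len = (n - p.len) + 1 := by omega
      rw [h2]
      exact q.chain _

lemma GInfPath.comp_edges_left (p : G.GPath) (q : G.GInfPath) (h) (n : ℕ) (hn : n < p.len) :
    (GInfPath.comp p q h).edges n = p.eF n := if_pos hn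

lemma GInfPath.comp_edges_right (p : G.GPath) (q : G.GInfPath) (h) (n : ℕ) :
    (GInfPath.comp p q h).edges (p.len + n) = q.edges n := by
  show (if p.len + n < p.len then _ else _) = _
  rw [if_neg (by omega)]
  congr 1
  omega

lemma GInfPath.comp_src (p : G.GPath) (q : G.GInfPath) (h) :
    (GInfPath.comp p q h).src = p.src := by
  show G.src ((GInfPath.comp p q h).edges 0) = p.src
  rw [GInfPath.comp_edges_left p q h 0 p.len_pos, p.src_eq_eF]

lemma GInfPath.comp_vtx_left (p : G.GPath) (q : G.GInfPath) (h) (n : ℕ) (hn : n < p.len) :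
    (GInfPath.comp p q h).vtx n = G.src (p.eF n) := by
  rw [GInfPath.vtx, GInfPath.comp_edges_left p q h n hn]

lemma GInfPath.comp_vtx_right (p : G.GPath) (q : G.GInfPath) (h) (n : ℕ) :
    (GInfPath.comp p q h).vtx (p.len + n) = q.vtx n := by
  rw [GInfPath.vtx, GInfPath.comp_edges_right p q h n]
  rfl

lemma GInfPath.comp_label_left (p : G.GPath) (q : G.GInfPath) (h) (n : ℕ) (hn : n < p.len) :
    (GInfPath.comp p q h).label n = G.lbl (p.eF n) := by
  rw [GInfPath.label_apply, GInfPath.comp_edges_left p q h n hn]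

lemma GInfPath.comp_label_right (p : G.GPath) (q : G.GInfPath) (h) (n : ℕ) :
    (GInfPath.comp p q h).label (p.len + n) = q.label n := by
  rw [GInfPath.label_apply, GInfPath.comp_edges_right p q h n]
  rfl

/-- The infinite path obtained by cycling around a closed finite path. -/
def GInfPath.cyc (p : G.GPath) (h : p.src = p.rng) : G.GInfPath where
  edges := fun n => p.eF (n % p.len)
  chain := by
    intro n
    have hp := p.len_pos
    have hmod : n % p.len < p.len := Nat.mod_lt _ hp
    show G.rng (p.eF (n % p.len)) = G.src (p.eF ((n + 1) % p.len))
    have h2 : (n + 1) % p.len = (n % p.len + 1) % p.len := by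
      conv_lhs => rw [← Nat.mod_add_mod]
    rcases lt_or_ge (n % p.len + 1) p.len with h3 | h3
    · rw [h2, Nat.mod_eq_of_lt h3]
      exact p.chainF _ h3
    · have h4 : n % p.len = p.len - 1 := by omega
      have h5 : (n + 1) % p.len = 0 := by
        rw [h2]
        have : n % p.len + 1 = p.len := by omega
        simp [this]
      rw [h4, h5, ← p.rng_eq_eF, ← p.src_eq_eF]
      exact h.symm

lemma GInfPath.cyc_edges (p : G.GPath) (h) (n : ℕ) :
    (GInfPath.cyc p h).edges n = p.eF (n % p.len) := rfl

lemma GInfPath.cyc_src (p : G.GPath) (h) : (GInfPath.cyc p h).src = p.src := by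
  show G.src (p.eF (0 % p.len)) = p.src
  rw [Nat.zero_mod, p.src_eq_eF]

lemma GInfPath.cyc_vtx_mul (p : G.GPath) (h) (k : ℕ) :
    (GInfPath.cyc p h).vtx (k * p.len) = p.src := by
  show G.src (p.eF (k * p.len % p.len)) = p.src
  rw [Nat.mul_mod_left, p.src_eq_eF]

lemma GInfPath.cyc_label (p : G.GPath) (h) (n : ℕ) :
    (GInfPath.cyc p h).label n = G.lbl (p.eF (n % p.len)) := rfl

/-- Concatenation of two finite paths. -/
def GPath.append (p q : G.GPath) (h : p.rng = q.src) : G.GPath :=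
  mkPath (fun i => if i < p.len then p.eF i else q.eF (i - p.len)) (p.len + q.len)
    (by have := p.len_pos; omega)
    (by
      intro i hi
      rcases lt_trichotomy (i + 1) p.len with h1 | h1 | h1
      · rw [if_pos h1, if_pos (by omega)]
        exact p.chainF i h1
      · rw [if_pos (by omega : i < p.len), if_neg (by omega), ← h1]
        have h3 : i = p.len - 1 := by omega
        have hp := p.len_pos
        have h2 : i + 1 - p.len = 0 := by omega
        rw [← h1] at h2
        rw [h2, h3, ← p.rng_eq_eF, h, q.src_eq_eF]
      · rw [if_neg (by omega), if_neg (by omega)]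
        have h2 : i + 1 - p.len = (i - p.len) + 1 := by omega
        rw [h2]
        exact q.chainF _ (by omega))

lemma GPath.append_len (p q : G.GPath) (h) : (p.append q h).len = p.len + q.len :=
  mkPath_len _ _ _ _

lemma GPath.append_eF_left (p q : G.GPath) (h) (i : ℕ) (hi : i < p.len) :
    (p.append q h).eF i = p.eF i := by
  rw [GPath.append, mkPath_eF _ _ _ _ i (by omega), if_pos hi]

lemma GPath.append_eF_right (p q : G.GPath) (h) (i : ℕ) (hi : i < q.len) :
    (p.append q h).eF (p.len + i) = q.eF i := by
  rw [GPath.append, mkPath_eF _ _ _ _ _ (by omega), if_neg (by omega)]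
  congr 1
  omega

lemma GPath.append_src (p q : G.GPath) (h) : (p.append q h).src = p.src := by
  rw [GPath.src_eq_eF, GPath.append_eF_left p q h 0 p.len_pos, p.src_eq_eF]

lemma GPath.append_rng (p q : G.GPath) (h) : (p.append q h).rng = q.rng := by
  rw [GPath.rng_eq_eF, GPath.append_len]
  have hq := q.len_pos
  have hp := p.len_pos
  have h1 : p.len + q.len - 1 = p.len + (q.len - 1) := by omega
  rw [h1, GPath.append_eF_right p q h _ (by omega), ← q.rng_eq_eF]

/-- A single-edge path. -/
def GPath.single (e : Ed) : G.GPath :=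
  mkPath (fun _ => e) 1 one_ne_zero (by omega)

lemma GPath.single_len (e : Ed) : (GPath.single (G := G) e).len = 1 := mkPath_len _ _ _ _

lemma GPath.single_eF (e : Ed) : (GPath.single (G := G) e).eF 0 = e :=
  mkPath_eF _ _ _ _ 0 (by omega)

lemma GPath.single_src (e : Ed) : (GPath.single (G := G) e).src = G.src e := mkPath_src _ _ _ _

lemma GPath.single_rng (e : Ed) : (GPath.single (G := G) e).rng = G.rng e := mkPath_rng _ _ _ _

end LabelledGraph
namespace LabelledGraph

variable {V Ed A : Type*} {G : LabelledGraph V Ed A}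

/-- An arbitrary infinite path starting at `w`, built using no-sinks. -/
noncomputable def arbPath (hns : ∀ u : V, ∃ e : Ed, G.src e = u) (w : V) : G.GInfPath where
  edges := fun n => Nat.rec ((hns w).choose) (fun _ e => (hns (G.rng e)).choose) n
  chain := by
    intro n
    exact ((hns (G.rng (Nat.rec ((hns w).choose) (fun _ e => (hns (G.rng e)).choose) n))).choose_spec).symm

lemma arbPath_src (hns : ∀ u : V, ∃ e : Ed, G.src e = u) (w : V) :
    (arbPath hns w).src = w := (hns w).choose_spec

/-- Periodicity of an infinite word. -/
def PerW (p : ℕ) (x : ℕ → A) : Prop := ∀ n, x (n + p) = x n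

lemma PerW.multi {p : ℕ} {x : ℕ → A} (h : PerW p x) (n k : ℕ) : x (n + k * p) = x n := by
  induction k with
  | zero => simp
  | succ k ih =>
    have : n + (k + 1) * p = (n + k * p) + p := by ring
    rw [this, h (n + k * p), ih]

lemma PerW.mod {p : ℕ} {x : ℕ → A} (h : PerW p x) (hp : p ≠ 0) (n : ℕ) :
    x (n % p) = x n := by
  conv_rhs => rw [← Nat.mod_add_div n p]
  rw [mul_comm]
  exact (h.multi (n % p) (n / p)).symm

lemma PerW.ext {p : ℕ} (hp : p ≠ 0) {x y : ℕ → A} (hx : PerW p x) (hy : PerW p y)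
    (hagree : ∀ i, i < p → x i = y i) : ∀ n, x n = y n := by
  intro n
  rw [← hx.mod hp n, ← hy.mod hp n]
  exact hagree _ (Nat.mod_lt _ (by omega))

section WithHyps

variable (hwlr : G.WeaklyLeftResolving G.barE)
    (hsa : G.StandingAssumptions G.barE)
    (hsing : ∀ w : V, ({w} : Set V) ∈ G.barE)

include hsing

omit hsing in
lemma mem_genVertex_self (k : ℕ) (w : V) : w ∈ G.genVertex k w := rfl

/-- Singleton generalized vertices from `hsing`. -/
lemma singleton_genVertex (u : V) :
    ∃ k : ℕ, 1 ≤ k ∧ G.genVertex k u = {u} := by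
  obtain ⟨k, F, hk, hF⟩ := hsing u
  have hu : u ∈ ({u} : Set V) := rfl
  rw [hF] at hu
  simp only [Set.mem_iUnion] at hu
  obtain ⟨w, hwF, hw⟩ := hu
  refine ⟨k, hk, ?_⟩
  have hcls : G.genVertex k w = G.genVertex k u := by
    have : G.labelsToVtx k u = G.labelsToVtx k w := hw
    ext z
    simp only [genVertex, Set.mem_setOf_eq, this]
  apply Set.eq_singleton_iff_unique_mem.mpr
  constructor
  · exact mem_genVertex_self (G := G) k u
  · intro z hz
    have : z ∈ ({u} : Set V) := by
      rw [hF]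
      exact Set.mem_iUnion.mpr ⟨w, Set.mem_iUnion.mpr ⟨hwF, by rw [hcls]; exact hz⟩⟩
    exact this

include hwlr in
/-- Backward determinism: two paths with the same label and range have the same source. -/
lemma backward_det (p q : G.GPath) (hlab : p.label = q.label) (hrng : p.rng = q.rng) :
    p.src = q.src := by
  by_contra hne
  have h1 := hwlr {p.src} (hsing p.src) {q.src} (hsing q.src) p.label ⟨p, rfl⟩
  have h2 : p.rng ∈ G.relRange {p.src} p.label ∩ G.relRange {q.src} p.label := by
    constructor
    · exact ⟨p, rfl, rfl, rfl⟩
    · exact ⟨q, hlab.symm, rfl, hrng.symm⟩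
  rw [h1] at h2
  obtain ⟨r, -, hr, -⟩ := h2
  simp only [Set.mem_inter_iff, Set.mem_singleton_iff] at hr
  exact hne (hr.1.symm.trans hr.2)

omit hsing in
/-- The suffix of a finite path from index `i`. -/
def GPath.dropP (p : G.GPath) (i : ℕ) (hi : i < p.len) : G.GPath :=
  mkPath (fun t => p.eF (i + t)) (p.len - i) (by omega)
    (fun t ht => by
      have := p.chainF (i + t) (by omega)
      rwa [Nat.add_assoc] at this)

omit hsing in
lemma GPath.dropP_label (p : G.GPath) (i : ℕ) (hi : i < p.len) :
    (p.dropP i hi).label = List.ofFn (fun t : Fin (p.len - i) => G.lbl (p.eF (i + t))) := by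
  rw [GPath.label_eq_ofFn]
  have hl : (p.dropP i hi).len = p.len - i := mkPath_len _ _ _ _
  refine List.ext_getElem (by simp [hl]) ?_
  intro t h1 h2
  rw [List.getElem_ofFn, List.getElem_ofFn]
  congr 1
  exact mkPath_eF _ _ _ _ t (by simpa [hl] using h1)

omit hsing in
lemma GPath.dropP_rng (p : G.GPath) (i : ℕ) (hi : i < p.len) :
    (p.dropP i hi).rng = p.rng := by
  rw [GPath.dropP, mkPath_rng, p.rng_eq_eF]
  have h2 : i + (p.len - i - 1) = p.len - 1 := by omega
  rw [h2]

omit hsing in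
lemma GPath.dropP_src (p : G.GPath) (i : ℕ) (hi : i < p.len) :
    (p.dropP i hi).src = G.src (p.eF i) := by
  rw [GPath.dropP, mkPath_src, Nat.add_zero]

include hwlr hsa in
/-- Backward uniqueness: two paths with the same label and range are equal. -/
lemma backward_unique (p q : G.GPath) (hlab : p.label = q.label) (hrng : p.rng = q.rng) :
    p = q := by
  have hlen : p.len = q.len := by
    rw [← p.label_length, ← q.label_length, hlab]
  have hlbl : ∀ i, i < p.len → G.lbl (p.eF i) = G.lbl (q.eF i) := by
    intro i hi
    rw [← p.label_getElem i hi, ← q.label_getElem i (hlen ▸ hi)]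
    simp_rw [hlab]
  have hsrc : ∀ i, i < p.len → G.src (p.eF i) = G.src (q.eF i) := by
    intro i hi
    have hiq : i < q.len := hlen ▸ hi
    have hd : (p.dropP i hi).label = (q.dropP i hiq).label := by
      rw [p.dropP_label i hi, q.dropP_label i hiq]
      refine List.ext_getElem (by simp only [List.length_ofFn]; omega) ?_
      intro t h1 h2
      simp only [List.getElem_ofFn]
      exact hlbl (i + t) (by simp only [List.length_ofFn] at h1; omega)
    have := backward_det hwlr hsing (p.dropP i hi) (q.dropP i hiq) hd
      (by rw [p.dropP_rng, q.dropP_rng, hrng])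
    rwa [p.dropP_src, q.dropP_src] at this
  refine GPath.ext_eF p q hlen ?_
  intro i hi
  apply hsa.edge_eq
  · exact hsrc i hi
  · rcases lt_or_ge (i + 1) p.len with h1 | h1
    · have h1q : i + 1 < q.len := by omega
      rw [p.chainF i h1, q.chainF i h1q]
      exact hsrc (i + 1) h1
    · have h2 : i = p.len - 1 := by omega
      have h3 : i = q.len - 1 := by omega
      have e1 : G.rng (p.eF i) = p.rng := by rw [h2, ← p.rng_eq_eF]
      have e2 : G.rng (q.eF i) = q.rng := by rw [h3, ← q.rng_eq_eF]
      rw [e1, e2, hrng]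
  · exact hlbl i hi

end WithHyps

end LabelledGraph
namespace LabelledGraph

variable {V Ed A : Type*} {G : LabelledGraph V Ed A}

lemma IsLabelled.ne_nil {α : List A} (h : G.IsLabelled α) : α ≠ [] := by
  obtain ⟨p, hp⟩ := h
  rw [← hp]
  simp [GPath.label, p.ne]

section Periodicity

variable {v : V} {l : ℕ} (hl : 1 ≤ l) (hnd : ¬ G.DisagreeableVtx l v)

include hnd in
lemma exists_agreeable_bound :
    ∃ n₀ : ℕ, 1 ≤ n₀ ∧ ∀ p : G.GPath, p.src = v → n₀ ≤ p.len → G.Agreeable l p.label := by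
  rw [DisagreeableVtx] at hnd
  push_neg at hnd
  obtain ⟨n, hn1, hn⟩ := hnd 1 one_pos
  refine ⟨n, by omega, ?_⟩
  intro p hp hlen
  have hnd2 := hn p.label (by rwa [p.label_length])
  rw [DisagreeablePath] at hnd2
  by_contra hagr
  exact hnd2 ⟨⟨p, rfl⟩, ⟨v, ⟨p, rfl, hp⟩, mem_genVertex_self l v⟩, hagr⟩

/-- A label that is agreeable has a period between 1 and `l`. -/
lemma agreeable_period {α : List A} (h : G.Agreeable l α) :
    ∃ p₀ : ℕ, 1 ≤ p₀ ∧ p₀ ≤ l ∧ ∀ i (hi : i + p₀ < α.length),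
      α[i + p₀]'(by omega) = α[i]'(by omega) := by
  obtain ⟨β, α', γ, hβ, hα', hγ, hlen, hle, h1, h2⟩ := h
  have hβne : β ≠ [] := hβ.ne_nil
  have hβpos : 0 < β.length := List.length_pos_iff.mpr hβne
  refine ⟨β.length, hβpos, hle, ?_⟩
  intro i hi
  have hlen1 : α.length = β.length + α'.length := by rw [h1, List.length_append]
  have hlen2 : α.length = α'.length + γ.length := by rw [h2, List.length_append]
  have hiα' : i < α'.length := by omega
  have e1 : α[i + β.length]'(by omega) = α'[i]'hiα' := by
    rw [List.getElem_of_eq h1 (by omega), List.getElem_append_right (by omega)]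
    congr 1
    omega
  have e2 : α[i]'(by omega) = α'[i]'hiα' := by
    rw [List.getElem_of_eq h2 (by omega), List.getElem_append_left]
  rw [e1, e2]

include hl hnd in
/-- Every infinite path starting at `v` has `l!`-periodic label. -/
lemma perL_of_src (q : G.GInfPath) (hq : q.src = v) :
    PerW l.factorial q.label := by
  obtain ⟨n₀, hn₀, hagr⟩ := exists_agreeable_bound hnd
  set L := l.factorial with hLdef
  have hL1 : 1 ≤ L := Nat.one_le_iff_ne_zero.mpr (Nat.factorial_ne_zero l)
  intro n
  set M := n + L + n₀ with hM
  have hMne : M ≠ 0 := by omega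
  set p := q.take M hMne with hp
  have hsrc : p.src = v := by rw [hp, q.take_src]; exact hq
  have hlen : p.len = M := q.take_len M hMne
  obtain ⟨p₀, hp₀1, hp₀l, hper⟩ := agreeable_period (hagr p hsrc (by omega))
  have hlab : ∀ j (hj : j < M), p.label[j]'(by rw [p.label_length, hlen]; exact hj) = q.label j := by
    intro j hj
    have hofn : p.label = List.ofFn (fun i : Fin M => q.label i) := q.take_label M hMne
    rw [List.getElem_of_eq hofn (by rw [p.label_length, hlen]; exact hj), List.getElem_ofFn]
  have hstep : ∀ k, k * p₀ ≤ L → q.label (n + k * p₀) = q.label n := by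
    intro k
    induction k with
    | zero => simp
    | succ k ih =>
      intro hk
      have hk' : k * p₀ ≤ L := by
        have : k * p₀ ≤ (k + 1) * p₀ := by nlinarith
        omega
      have h1 : n + (k + 1) * p₀ = (n + k * p₀) + p₀ := by ring
      rw [h1]
      have hLL : p.label.length = M := by rw [p.label_length, hlen]
      have hsucc : (k+1) * p₀ = k * p₀ + p₀ := by ring
      have h2 : (n + k * p₀) + p₀ < M := by omega
      have h3 := hper (n + k * p₀) (by omega)
      rw [hlab (n + k * p₀ + p₀) (by omega), hlab (n + k * p₀) (by omega)] at h3
      rw [h3]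
      exact ih hk'
  have hdvd : p₀ ∣ L := Nat.dvd_factorial hp₀1 hp₀l
  have := hstep (L / p₀) (by rw [Nat.div_mul_cancel hdvd])
  rwa [Nat.div_mul_cancel hdvd] at this

end Periodicity

end LabelledGraph
namespace LabelledGraph

variable {V Ed A : Type*} {G : LabelledGraph V Ed A}


lemma finTake_length (x : ℕ → A) (N : ℕ) : (finTake x N).length = N := by
  simp [finTake]

lemma finTake_getElem (x : ℕ → A) (N i : ℕ) (hi : i < N) :
    (finTake x N)[i]'(by rwa [finTake_length]) = x i := by
  have h0 : (finTake x N)[i]'(by rwa [finTake_length]) =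
      (List.ofFn (fun i : Fin N => x i))[i]'(by simpa using hi) := rfl
  rw [h0, List.getElem_ofFn]

lemma GPath.append_label (p q : G.GPath) (h) : (p.append q h).label = p.label ++ q.label := by
  refine List.ext_getElem (by rw [(p.append q h).label_length, GPath.append_len,
    List.length_append, p.label_length, q.label_length]) ?_
  intro i h1 h2
  have hi : i < p.len + q.len := by
    rwa [(p.append q h).label_length, GPath.append_len] at h1
  rw [(p.append q h).label_getElem i (by rwa [GPath.append_len])]
  rcases lt_or_ge i p.len with h3 | h3
  · rw [GPath.append_eF_left p q h i h3, List.getElem_append_left (by rwa [p.label_length]),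
      p.label_getElem i h3]
  · have h4 : i - p.len < q.len := by omega
    have e2 : (p.append q h).eF i = q.eF (i - p.len) := by
      conv_lhs => rw [(by omega : i = p.len + (i - p.len))]
      exact GPath.append_eF_right p q h _ h4
    rw [e2, List.getElem_append_right (by rw [p.label_length]; omega)]
    simp only [p.label_length]
    rw [q.label_getElem _ h4]

lemma GPath.single_label (e : Ed) : (GPath.single (G := G) e).label = [G.lbl e] := by
  refine List.ext_getElem (by rw [GPath.label_length, GPath.single_len]; rfl) ?_
  intro i h1 h2
  have hi : i = 0 := by
    rw [GPath.label_length, GPath.single_len] at h1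
    omega
  subst hi
  rw [(GPath.single (G := G) e).label_getElem 0 (by rw [GPath.single_len]; omega),
    GPath.single_eF]
  simp

section SC


variable {v : V} {l : ℕ}

/-- `Per`-iodicity of labels of paths rooted at a vertex on a `v`-rooted path. -/
lemma perL_at_anchor (hl : 1 ≤ l) (hnd : ¬ G.DisagreeableVtx l v)
    (q₀ : G.GInfPath) (hq₀ : q₀.src = v) (m : ℕ) (Ξ : G.GInfPath)
    (hΞ : Ξ.src = q₀.vtx m) : PerW l.factorial Ξ.label := by
  rcases Nat.eq_zero_or_pos m with hm | hm
  · subst hm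
    exact perL_of_src hl hnd Ξ (by rw [hΞ, GInfPath.vtx_zero, hq₀])
  · have hrng : (q₀.take m (by omega)).rng = Ξ.src := by rw [q₀.take_rng, hΞ]
    set W := GInfPath.comp (q₀.take m (by omega)) Ξ hrng with hW
    have hWsrc : W.src = v := by
      rw [hW, GInfPath.comp_src, q₀.take_src, GInfPath.vtx_zero, hq₀]
    have hWper := perL_of_src hl hnd W hWsrc
    intro n
    have h1 : ∀ t, Ξ.label t = W.label (m + t) := by
      intro t
      rw [hW]
      have := GInfPath.comp_label_right (q₀.take m (by omega)) Ξ hrng t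
      rw [q₀.take_len] at this
      exact this.symm
    rw [h1 n, h1 (n + l.factorial), ← Nat.add_assoc]
    exact hWper (m + n)

variable (hsc : G.StronglyCofinal) (hsing : ∀ w : V, ({w} : Set V) ∈ G.barE)

include hsc hsing in
/-- Strong cofinality with a singleton target. -/
lemma sc_singleton (x : ℕ → A) (hx : G.IsInfLabelled x) (u w : V) (hw : w ∈ G.infSrc x) :
    ∃ N : ℕ, 1 ≤ N ∧ ∃ (m : ℕ) (lds : Fin m → List A),
      G.relRange (G.genVertex 1 w) (finTake x N) ⊆ ⋃ i, G.relRange {u} (lds i) := by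
  obtain ⟨k, hk, hku⟩ := singleton_genVertex hsing u
  obtain ⟨N, hN, m, lds, _, hcov⟩ := hsc x hx k hk u w hw
  rw [hku] at hcov
  exact ⟨N, hN, m, lds, hcov⟩

omit hsc hsing in
/-- Pumping a strong-cofinality covering to larger prefixes. -/
lemma pump_covering (x : ℕ → A) (S : Set V) (N : ℕ) (hN : 1 ≤ N) (m : ℕ) (lds : Fin m → List A)
    (hcov : G.relRange (G.genVertex 1 v) (finTake x N) ⊆ ⋃ i, G.relRange S (lds i)) (Δ : ℕ) :
    G.relRange (G.genVertex 1 v) (finTake x (N + Δ)) ⊆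
      ⋃ i, G.relRange S (lds i ++ List.ofFn (fun t : Fin Δ => x (N + t))) := by
  induction Δ with
  | zero => simpa using hcov
  | succ Δ ih =>
    intro z hz
    obtain ⟨p, hpl, hps, hpr⟩ := hz
    have hplen : p.len = N + Δ + 1 := by
      rw [← p.label_length, hpl]
      simp [finTake]
    -- split off the last edge
    have hlen1 : N + Δ ≠ 0 := by omega
    set p' : G.GPath := mkPath p.eF (N + Δ) hlen1 (fun i hi => p.chainF i (by omega)) with hp'
    have hp'len : p'.len = N + Δ := mkPath_len _ _ _ _
    have hp'eF : ∀ i, i < N + Δ → p'.eF i = p.eF i := fun i hi => mkPath_eF _ _ _ _ i hi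
    have hlblx : ∀ i, i < N + Δ + 1 → G.lbl (p.eF i) = x i := by
      intro i hi
      have h3 : i < p.len := by omega
      have e1 := (p.label_getElem i h3).symm
      rw [List.getElem_of_eq hpl (by rw [p.label_length, hplen]; omega),
        finTake_getElem x _ i (by omega)] at e1
      exact e1
    have hp'lab : p'.label = finTake x (N + Δ) := by
      refine List.ext_getElem (by rw [p'.label_length, hp'len, finTake_length]) ?_
      intro i h1 h2
      have hi : i < N + Δ := by rwa [p'.label_length, hp'len] at h1
      rw [finTake_getElem x _ i hi, p'.label_getElem i (by omega : i < p'.len),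
        hp'eF i hi, hlblx i (by omega)]
    have hp'src : p'.src = p.src := by
      rw [hp', mkPath_src, p.src_eq_eF]
    have hmem : p'.rng ∈ G.relRange (G.genVertex 1 v) (finTake x (N + Δ)) :=
      ⟨p', hp'lab, by rw [hp'src]; exact hps, rfl⟩
    obtain ⟨j, hj⟩ := Set.mem_iUnion.mp (ih hmem)
    obtain ⟨r, hrl, hrs, hrr⟩ := hj
    set ε := p.eF (N + Δ) with hε
    have hεsrc : G.src ε = p'.rng := by
      rw [hp', mkPath_rng]
      have h5 := p.chainF (N + Δ - 1) (by omega)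
      have h6 : N + Δ - 1 + 1 = N + Δ := by omega
      rw [h6] at h5
      exact h5.symm
    have happ : r.rng = (GPath.single (G := G) ε).src := by
      rw [GPath.single_src, hεsrc, hrr]
    refine Set.mem_iUnion.mpr ⟨j, ⟨r.append (GPath.single ε) happ, ?_, ?_, ?_⟩⟩
    · rw [GPath.append_label, GPath.single_label, hrl]
      have hofn : (List.ofFn fun t : Fin (Δ+1) => x (N + ↑t)) =
          (List.ofFn fun t : Fin Δ => x (N + ↑t)) ++ [x (N + Δ)] := by
        rw [List.ofFn_succ']
        simp [List.concat_eq_append]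
      rw [hofn, hlblx (N + Δ) (by omega), List.append_assoc]
    · rw [GPath.append_src]
      exact hrs
    · rw [GPath.append_rng, GPath.single_rng, ← hpr, p.rng_eq_eF, hplen]
      norm_num
      rfl

end SC

end LabelledGraph
namespace LabelledGraph

variable {V Ed A : Type*} {G : LabelledGraph V Ed A}

section Core

variable {v : V} {l : ℕ} (hl : 1 ≤ l)
    (hwlr : G.WeaklyLeftResolving G.barE)
    (hsa : G.StandingAssumptions G.barE)
    (hsc : G.StronglyCofinal)
    (hsing : ∀ w : V, ({w} : Set V) ∈ G.barE)
    (hnd : ¬ G.DisagreeableVtx l v)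

include hl hnd in
/-- Mixing lemma: if a suffix path returns to its source after `e` steps, its label
is `e`-periodic. -/
lemma label_periodic_of_return (q₀ : G.GInfPath) (hq₀ : q₀.src = v) (m e : ℕ) (he : 1 ≤ e)
    (hone : (q₀.shift m).vtx e = (q₀.shift m).vtx 0) :
    PerW e (q₀.shift m).label := by
  set L := l.factorial with hL
  have hL1 : 1 ≤ L := Nat.one_le_iff_ne_zero.mpr (Nat.factorial_ne_zero l)
  set Θ := q₀.shift m with hΘ
  set z := Θ.label with hz
  set w := Θ.vtx 0 with hw
  have hwq₀ : w = q₀.vtx m := by rw [hw, hΘ, GInfPath.shift_vtx, Nat.add_zero]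
  have hene : e ≠ 0 := by omega
  set loop₁ := Θ.take e hene with hloop₁
  have hl₁len : loop₁.len = e := Θ.take_len e hene
  have hl₁src : loop₁.src = w := Θ.take_src e hene
  have hl₁cyc : loop₁.src = loop₁.rng := by
    rw [hl₁src, hloop₁, Θ.take_rng e hene, hone]
  set C := GInfPath.cyc loop₁ hl₁cyc with hC
  have hCsrc : C.src = w := by rw [hC, GInfPath.cyc_src, hl₁src]
  have hCedge : ∀ n, C.edges n = Θ.edges (n % e) := by
    intro n
    rw [hC, GInfPath.cyc_edges, hl₁len, hloop₁, Θ.take_eF e hene _ (Nat.mod_lt _ (by omega))]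
  have hClab : ∀ n, C.label n = z (n % e) := by
    intro n
    rw [GInfPath.label_apply, hCedge n, hz, GInfPath.label_apply]
  have hzper : PerW L z := perL_at_anchor hl hnd q₀ hq₀ m Θ (by rw [hΘ]; rfl)
  have hCper : PerW L C.label := perL_at_anchor hl hnd q₀ hq₀ m C (by rw [hCsrc, hwq₀])
  -- the mixed path W
  have hLe : L * e ≠ 0 := by positivity
  have hcompOK : (C.take (L * e) hLe).rng = (Θ.shift e).src := by
    rw [C.take_rng _ hLe, hC]
    have := GInfPath.cyc_vtx_mul loop₁ hl₁cyc L
    rw [hl₁len] at this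
    rw [this, hl₁src]
    show w = Θ.vtx (e + 0)
    rw [Nat.add_zero, hone]
  set W := GInfPath.comp (C.take (L * e) hLe) (Θ.shift e) hcompOK with hW
  have hWsrc : W.src = w := by
    rw [hW, GInfPath.comp_src, C.take_src _ hLe, GInfPath.vtx_zero, hCsrc]
  have hWper : PerW L W.label := perL_at_anchor hl hnd q₀ hq₀ m W (by rw [hWsrc, hwq₀])
  have hWleft : ∀ i, i < L * e → W.label i = z (i % e) := by
    intro i hi
    rw [hW, GInfPath.comp_label_left _ _ _ i (by rwa [C.take_len _ hLe]),
      C.take_eF _ hLe i hi, ← GInfPath.label_apply, hClab]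
  have hWright : ∀ s, W.label (L * e + s) = z (e + s) := by
    intro s
    have h1 : (C.take (L * e) hLe).len = L * e := C.take_len _ hLe
    have := GInfPath.comp_label_right (C.take (L * e) hLe) (Θ.shift e) hcompOK s
    rw [h1] at this
    rw [this, GInfPath.shift_label]
  set cw : ℕ → A := fun n => z (n % e) with hcw
  have hcwper : PerW L cw := by
    intro n
    have := hCper n
    rwa [hClab, hClab] at this
  have hb0 : ∀ s, s < L → z (e + s) = cw s := by
    intro s hs
    have h1 : z (e + s) = W.label (L * e + s) := (hWright s).symm
    have h2 : W.label (L * e + s) = W.label s := by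
      have : L * e + s = s + e * L := by ring
      rw [this]
      exact hWper.multi s e
    rw [h1, h2, hWleft s (by nlinarith)]
  have hb : ∀ s, z (e + s) = cw s := by
    intro s
    have h1 : z (e + s) = z (e + s % L) := by
      conv_lhs => rw [← Nat.mod_add_div s L, ← Nat.add_assoc, Nat.mul_comm L (s / L)]
      exact hzper.multi (e + s % L) (s / L)
    rw [h1, hb0 (s % L) (Nat.mod_lt _ (by omega)), hcwper.mod (by omega)]
  have hd : ∀ s, z s = cw s := by
    intro s
    rcases lt_or_ge s e with hse | hse
    · rw [hcw]
      simp only [Nat.mod_eq_of_lt hse]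
    · have h1 : s = e + (s - e) := by omega
      rw [h1, hb (s - e), hcw]
      simp only
      congr 1
      rw [Nat.add_comm e (s - e), Nat.add_mod_right]
  intro n
  rw [Nat.add_comm n e, hb n, ← hd n]


include hl hwlr hsa hsc hsing hnd in
/-- Core step: once the path returns to its base after `e` steps with `e`-periodic label,
the next vertices agree. -/
lemma core_step (q₀ : G.GInfPath) (hq₀ : q₀.src = v) (m e : ℕ) (he : 1 ≤ e)
    (hone : (q₀.shift m).vtx e = (q₀.shift m).vtx 0)
    (hz : PerW e (q₀.shift m).label) :
    (q₀.shift m).vtx (e + 1) = (q₀.shift m).vtx 1 := by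
  set L := l.factorial with hL
  have hL1 : 1 ≤ L := Nat.one_le_iff_ne_zero.mpr (Nat.factorial_ne_zero l)
  set Θ := q₀.shift m with hΘ
  set z := Θ.label with hzdef
  set w := Θ.vtx 0 with hw
  have hwq₀ : w = q₀.vtx m := by rw [hw, hΘ, GInfPath.shift_vtx, Nat.add_zero]
  have hene : e ≠ 0 := by omega
  set loop₁ := Θ.take e hene with hloop₁
  have hl₁len : loop₁.len = e := Θ.take_len e hene
  have hl₁src : loop₁.src = w := Θ.take_src e hene
  have hl₁cyc : loop₁.src = loop₁.rng := by
    rw [hl₁src, hloop₁, Θ.take_rng e hene, hone]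
  set C := GInfPath.cyc loop₁ hl₁cyc with hC
  have hCsrc : C.src = w := by rw [hC, GInfPath.cyc_src, hl₁src]
  have hCedge : ∀ n, C.edges n = Θ.edges (n % e) := by
    intro n
    rw [hC, GInfPath.cyc_edges, hl₁len, hloop₁, Θ.take_eF e hene _ (Nat.mod_lt _ (by omega))]
  have hClab : ∀ n, C.label n = z n := by
    intro n
    rw [GInfPath.label_apply, hCedge n, ← GInfPath.label_apply, ← hzdef, hz.mod hene]
  have hCvtx_mul : ∀ k : ℕ, C.vtx (k * e) = w := by
    intro k
    have := GInfPath.cyc_vtx_mul loop₁ hl₁cyc k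
    rw [hl₁len] at this
    rw [hC, this, hl₁src]
  -- strong cofinality towards the vertex after the loop
  set u₁ := Θ.vtx (e + 1) with hu₁
  have hxinf : G.IsInfLabelled C.label := ⟨C, rfl⟩
  have hwsrc : w ∈ G.infSrc C.label := ⟨C, rfl, hCsrc⟩
  obtain ⟨N₁, hN₁, m₁, lds, hcov⟩ := sc_singleton hsc hsing C.label hxinf u₁ w hwsrc
  set Δ := N₁ * e - N₁ with hΔ
  set N := N₁ + Δ with hN
  have hNe : N = N₁ * e := by rw [hN, hΔ]; have : N₁ ≤ N₁ * e := by nlinarith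
                              omega
  have hcov2 := pump_covering (v := w) C.label {u₁} N₁ hN₁ m₁ lds hcov Δ
  have hNne : N ≠ 0 := by
    have : 1 * 1 ≤ N₁ * e := by exact Nat.mul_le_mul hN₁ he
    omega
  have hwmem : w ∈ G.relRange (G.genVertex 1 w) (finTake C.label N) := by
    refine ⟨C.take N hNne, ?_, ?_, ?_⟩
    · rw [C.take_label]
      rfl
    · rw [C.take_src, GInfPath.vtx_zero, hCsrc]
      exact mem_genVertex_self 1 w
    · rw [C.take_rng, hNe, hCvtx_mul N₁]
  obtain ⟨j, hj⟩ := Set.mem_iUnion.mp (hcov2 hwmem)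
  obtain ⟨B, hBlab, hBsrc, hBrng⟩ := hj
  have hBsrc' : B.src = u₁ := hBsrc
  -- the second loop through u₁
  have happ : (GPath.single (G := G) (Θ.edges e)).rng = B.src := by
    rw [GPath.single_rng, hBsrc', hu₁, GInfPath.vtx_succ]
  set loop₂ := (GPath.single (G := G) (Θ.edges e)).append B happ with hloop₂
  have hl₂src : loop₂.src = w := by
    rw [hloop₂, GPath.append_src, GPath.single_src, ← GInfPath.vtx, hone]
  have hl₂rng : loop₂.rng = w := by
    rw [hloop₂, GPath.append_rng, hBrng]
  have hl₂cyc : loop₂.src = loop₂.rng := by rw [hl₂src, hl₂rng]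
  set h₂ := loop₂.len with hh₂
  have hh₂pos : 1 ≤ h₂ := loop₂.len_pos
  -- the word-forcing path Ω
  have hLe : L * e ≠ 0 := by positivity
  have hA1ok : (C.take (L * e) hLe).rng = loop₂.src := by
    rw [C.take_rng, hl₂src]
    have : L * e = L * e := rfl
    rw [hCvtx_mul L]
  set A₁ := (C.take (L * e) hLe).append loop₂ hA1ok with hA₁
  have hA₁len : A₁.len = L * e + h₂ := by
    rw [hA₁, GPath.append_len, C.take_len]
  have hA₁ok2 : A₁.rng = Θ.src := by
    rw [hA₁, GPath.append_rng, hl₂rng, hw, GInfPath.vtx_zero]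
  set Ω := GInfPath.comp A₁ Θ hA₁ok2 with hΩ
  have hΩsrc : Ω.src = w := by
    rw [hΩ, GInfPath.comp_src, hA₁, GPath.append_src, C.take_src, GInfPath.vtx_zero, hCsrc]
  have hΩper : PerW L Ω.label := perL_at_anchor hl hnd q₀ hq₀ m Ω (by rw [hΩsrc, hwq₀])
  have hzper : PerW L z := perL_at_anchor hl hnd q₀ hq₀ m Θ (by rw [hΘ]; rfl)
  have hΩz : ∀ n, Ω.label n = z n := by
    refine PerW.ext (p := L) (by omega) hΩper hzper ?_
    intro i hi
    have hiA : i < A₁.len := by rw [hA₁len]; nlinarith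
    rw [hΩ, GInfPath.comp_label_left _ _ _ i hiA, hA₁,
      GPath.append_eF_left _ _ _ i (by rw [C.take_len]; nlinarith),
      C.take_eF _ hLe i (by nlinarith), ← GInfPath.label_apply, hClab]
  -- the label of loop₂ is the corresponding prefix of z
  have hloop₂lbl : ∀ t, t < h₂ → G.lbl (loop₂.eF t) = z t := by
    intro t ht
    have h1 : A₁.eF (L * e + t) = loop₂.eF t := by
      rw [hA₁]
      have := GPath.append_eF_left (C.take (L * e) hLe) loop₂ hA1ok
      have h2 := GPath.append_eF_right (C.take (L * e) hLe) loop₂ hA1ok t (by rwa [← hh₂])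
      rwa [C.take_len] at h2
    have h3 : Ω.label (L * e + t) = G.lbl (A₁.eF (L * e + t)) :=
      GInfPath.comp_label_left _ _ _ _ (by rw [hA₁len]; omega)
    have h4 : z (L * e + t) = z t := by
      have heq : L * e + t = t + L * e := by ring
      rw [heq]
      exact hz.multi t L
    rw [← h4, ← hΩz, h3, h1]
  -- z is h₂-periodic
  have hzh : PerW h₂ z := by
    intro s
    have h1 : Ω.label (A₁.len + s) = z s := by
      rw [hΩ, GInfPath.comp_label_right]
    have h2 : Ω.label (A₁.len + s) = z (A₁.len + s) := hΩz _
    have h3 : z (L * e + h₂ + s) = z s := by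
      rw [← h1, h2, hA₁len]
    have h4 : z (L * e + h₂ + s) = z (s + h₂) := by
      have heq : L * e + h₂ + s = (s + h₂) + L * e := by ring
      rw [heq]
      exact hz.multi (s + h₂) L
    rw [← h4, h3]
  -- the two iterated loops have the same label and range, hence are equal
  have hnstar : e * h₂ ≠ 0 := by positivity
  set P₁ := C.take (e * h₂) hnstar with hP₁
  set C₂ := GInfPath.cyc loop₂ hl₂cyc with hC₂
  set P₂ := C₂.take (e * h₂) hnstar with hP₂
  have hP₁lab : ∀ i, i < e * h₂ → G.lbl (P₁.eF i) = z i := by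
    intro i hi
    rw [hP₁, C.take_eF _ _ i hi, ← GInfPath.label_apply, hClab]
  have hP₂lab : ∀ i, i < e * h₂ → G.lbl (P₂.eF i) = z i := by
    intro i hi
    rw [hP₂, C₂.take_eF _ _ i hi, hC₂, GInfPath.cyc_edges, ← hh₂,
      hloop₂lbl _ (Nat.mod_lt _ (by omega)), hzh.mod (by omega)]
  have hlabeq : P₁.label = P₂.label := by
    refine List.ext_getElem (by rw [P₁.label_length, P₂.label_length, hP₁, hP₂,
      C.take_len, C₂.take_len]) ?_
    intro i h1 h2
    have hi : i < e * h₂ := by rwa [P₁.label_length, hP₁, C.take_len] at h1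
    rw [P₁.label_getElem i (by rwa [hP₁, C.take_len]),
      P₂.label_getElem i (by rwa [hP₂, C₂.take_len]), hP₁lab i hi, hP₂lab i hi]
  have hrngeq : P₁.rng = P₂.rng := by
    rw [hP₁, hP₂, C.take_rng, C₂.take_rng]
    have e1 : C.vtx (e * h₂) = w := by
      rw [Nat.mul_comm]
      exact hCvtx_mul h₂
    have e2 : C₂.vtx (e * h₂) = w := by
      have := GInfPath.cyc_vtx_mul loop₂ hl₂cyc e
      rw [← hh₂] at this
      rw [hC₂, this, hl₂src]
    rw [e1, e2]
  have hPeq : P₁ = P₂ := backward_unique hwlr hsa hsing P₁ P₂ hlabeq hrngeq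
  -- compare the first edges
  have hfirst : Θ.edges 0 = Θ.edges e := by
    have h1 : P₁.eF 0 = Θ.edges 0 := by
      rw [hP₁, C.take_eF _ _ 0 (by positivity), hCedge, Nat.zero_mod]
    have h2 : P₂.eF 0 = Θ.edges e := by
      rw [hP₂, C₂.take_eF _ _ 0 (by positivity), hC₂, GInfPath.cyc_edges, ← hh₂,
        Nat.zero_mod, hloop₂]
      rw [GPath.append_eF_left _ _ _ 0 (by rw [GPath.single_len]; omega), GPath.single_eF]
    rw [← h1, ← h2, hPeq]
  show Θ.vtx (e + 1) = Θ.vtx 1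
  rw [GInfPath.vtx_succ, GInfPath.vtx_succ, hfirst]

omit hsing in
lemma take_label_ext (q₁ q₂ : G.GInfPath) (M : ℕ) (hM : M ≠ 0)
    (h : ∀ i, i < M → q₁.label i = q₂.label i) :
    (q₁.take M hM).label = (q₂.take M hM).label := by
  rw [q₁.take_label, q₂.take_label]
  refine List.ext_getElem (by simp) ?_
  intro i h1 h2
  rw [List.getElem_ofFn, List.getElem_ofFn]
  exact h i (by simpa using h1)

include hl hwlr hsa hsc hsing hnd in
lemma vertex_periodic (q₀ : G.GInfPath) (hq₀ : q₀.src = v) (m e : ℕ) (he : 1 ≤ e)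
    (hone : (q₀.shift m).vtx e = (q₀.shift m).vtx 0) :
    ∀ s, (q₀.shift m).vtx (s + e) = (q₀.shift m).vtx s := by
  have hz : PerW e (q₀.shift m).label := label_periodic_of_return hl hnd q₀ hq₀ m e he hone
  have key : ∀ a b : ℕ, a = b → q₀.vtx a = q₀.vtx b := fun a b hab => by rw [hab]
  intro s
  induction s with
  | zero => simpa using hone
  | succ s ih =>
    have hone' : (q₀.shift (m + s)).vtx e = (q₀.shift (m + s)).vtx 0 := by
      simp only [GInfPath.shift_vtx] at ih ⊢
      rw [key (m + s + e) (m + (s + e)) (by omega), ih]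
      exact key _ _ (by omega)
    have hz' : PerW e (q₀.shift (m + s)).label := by
      intro t
      have := hz (s + t)
      simp only [GInfPath.shift_label] at this ⊢
      have e1 : m + s + (t + e) = m + (s + t + e) := by omega
      have e2 : m + s + t = m + (s + t) := by omega
      rw [e1, e2]
      exact this
    have hcs := core_step hl hwlr hsa hsc hsing hnd q₀ hq₀ (m + s) e he hone' hz'
    simp only [GInfPath.shift_vtx] at hcs ⊢
    rw [key (m + (s + 1 + e)) (m + s + (e + 1)) (by omega), hcs]
    exact key _ _ (by omega)

include hl hwlr hsa hsc hsing hnd in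
/-- Main pairing lemma: any two infinite paths from `v` coincide vertex-wise. -/
lemma main_pair (R S : G.GInfPath) (hR : R.src = v) (hS : S.src = v) (n : ℕ) :
    R.vtx n = S.vtx n := by
  set L := l.factorial with hLdef
  have hL1 : 1 ≤ L := Nat.one_le_iff_ne_zero.mpr (Nat.factorial_ne_zero l)
  set T := L + n + 1 with hT
  have hTne : T ≠ 0 := by omega
  have hxinf : G.IsInfLabelled R.label := ⟨R, rfl⟩
  have hvsrc : v ∈ G.infSrc R.label := ⟨R, rfl, hR⟩
  obtain ⟨N₀, hN₀, m₁, lds, hcov⟩ := sc_singleton hsc hsing R.label hxinf (S.vtx T) v hvsrc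
  have hN₀ne : N₀ ≠ 0 := by omega
  have hmem : R.vtx N₀ ∈ G.relRange (G.genVertex 1 v) (finTake R.label N₀) := by
    refine ⟨R.take N₀ hN₀ne, ?_, ?_, R.take_rng N₀ hN₀ne⟩
    · rw [R.take_label]
      rfl
    · rw [R.take_src, GInfPath.vtx_zero, hR]
      exact mem_genVertex_self 1 v
  obtain ⟨j, hj⟩ := Set.mem_iUnion.mp (hcov hmem)
  obtain ⟨B, hBlab, hBsrc, hBrng⟩ := hj
  have hBsrc' : B.src = S.vtx T := hBsrc
  have hok1 : B.rng = (R.shift N₀).src := by rw [hBrng]; rfl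
  have hok2 : (S.take T hTne).rng = (GInfPath.comp B (R.shift N₀) hok1).src := by
    rw [S.take_rng, GInfPath.comp_src, hBsrc']
  set Θ := GInfPath.comp (S.take T hTne) (GInfPath.comp B (R.shift N₀) hok1) hok2 with hΘ
  set c := T + B.len with hc
  have hΘsrc : Θ.src = v := by
    rw [hΘ, GInfPath.comp_src, S.take_src, GInfPath.vtx_zero, hS]
  have hΘperL : PerW L Θ.label := perL_of_src hl hnd Θ hΘsrc
  have hSperL : PerW L S.label := perL_of_src hl hnd S hS
  have hRperL : PerW L R.label := perL_of_src hl hnd R hR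
  have hΘS : ∀ i, Θ.label i = S.label i := by
    refine PerW.ext (p := L) (by omega) hΘperL hSperL ?_
    intro i hi
    have hiT : i < T := by omega
    rw [hΘ, GInfPath.comp_label_left _ _ _ i (by rwa [S.take_len]),
      S.take_eF T hTne i hiT, ← GInfPath.label_apply]
  have hΘright : ∀ s, Θ.label (c + s) = R.label (N₀ + s) := by
    intro s
    have h1 : c + s = T + (B.len + s) := by omega
    rw [h1, hΘ]
    have h2 := GInfPath.comp_label_right (S.take T hTne) _ hok2 (B.len + s)
    rw [S.take_len] at h2
    rw [h2, GInfPath.comp_label_right B (R.shift N₀) hok1 s, GInfPath.shift_label]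
  have hkey : ∀ s, R.label (N₀ + s) = S.label (c + s) := by
    intro s
    rw [← hΘright s, hΘS]
  have hΘvtx_left : ∀ t, t ≤ T → Θ.vtx t = S.vtx t := by
    intro t ht
    rcases lt_or_ge t T with h1 | h1
    · rw [hΘ, GInfPath.comp_vtx_left _ _ _ t (by rwa [S.take_len]), S.take_eF T hTne t h1]
      rfl
    · have h2 : t = T := by omega
      have h3 := GInfPath.comp_vtx_right (S.take T hTne) (GInfPath.comp B (R.shift N₀) hok1) hok2 0
      rw [S.take_len, Nat.add_zero] at h3
      rw [h2, hΘ, h3, GInfPath.vtx_zero, GInfPath.comp_src, hBsrc']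
  have hΘvtx_right : ∀ s, Θ.vtx (c + s) = R.vtx (N₀ + s) := by
    intro s
    have h1 : c + s = T + (B.len + s) := by omega
    rw [h1, hΘ]
    have h2 := GInfPath.comp_vtx_right (S.take T hTne) (GInfPath.comp B (R.shift N₀) hok1) hok2 (B.len + s)
    rw [S.take_len] at h2
    rw [h2, GInfPath.comp_vtx_right B (R.shift N₀) hok1 s, GInfPath.shift_vtx]
  rcases le_or_gt N₀ c with hle | hlt
  · -- case `e ≥ 0`
    set e := c - N₀ with he
    have hce : c = N₀ + e := by omega
    have hkey2 : ∀ i, R.label i = S.label (e + i) := by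
      intro i
      have h1 : R.label (i + N₀ * L) = R.label i := hRperL.multi i N₀
      have hNL : N₀ ≤ N₀ * L := Nat.le_mul_of_pos_right _ (by omega)
      have h2 : i + N₀ * L = N₀ + (i + N₀ * L - N₀) := by omega
      have h3 : c + (i + N₀ * L - N₀) = (e + i) + N₀ * L := by omega
      rw [← h1, h2, hkey (i + N₀ * L - N₀), h3]
      exact hSperL.multi (e + i) N₀
    have halign : ∀ s, R.vtx s = Θ.vtx (e + s) := by
      intro s
      set M := s + N₀ + 1 with hM
      have hMne : M ≠ 0 := by omega
      have hlabeq : (R.take M hMne).label = ((Θ.shift e).take M hMne).label := by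
        refine take_label_ext R (Θ.shift e) M hMne ?_
        intro i hi
        rw [GInfPath.shift_label, hΘS, ← hkey2 i]
      have hrngeq : (R.take M hMne).rng = ((Θ.shift e).take M hMne).rng := by
        rw [R.take_rng, (Θ.shift e).take_rng, GInfPath.shift_vtx]
        have h1 : e + M = c + (M - N₀) := by omega
        have h2 : N₀ + (M - N₀) = M := by omega
        rw [h1, hΘvtx_right (M - N₀), h2]
      have hPeq := backward_unique hwlr hsa hsing _ _ hlabeq hrngeq
      have hedge : R.edges s = Θ.edges (e + s) := by
        have h1 := congrArg (fun p => GPath.eF p s) hPeq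
        rwa [R.take_eF M hMne s (by omega), (Θ.shift e).take_eF M hMne s (by omega),
          GInfPath.shift_edges] at h1
      rw [GInfPath.vtx, GInfPath.vtx, hedge]
    rcases Nat.eq_zero_or_pos e with he0 | hepos
    · have h1 := halign n
      rw [he0, Nat.zero_add] at h1
      rw [h1, hΘvtx_left n (by omega)]
    · have hone : (Θ.shift 0).vtx e = (Θ.shift 0).vtx 0 := by
        simp only [GInfPath.shift_vtx, Nat.zero_add]
        have h1 := halign 0
        rw [Nat.add_zero] at h1
        rw [← h1, GInfPath.vtx_zero, GInfPath.vtx_zero, hR, hΘsrc]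
      have hvp := vertex_periodic hl hwlr hsa hsc hsing hnd Θ hΘsrc 0 e hepos hone n
      simp only [GInfPath.shift_vtx, Nat.zero_add] at hvp
      rw [halign n, ← Nat.add_comm n e, hvp, hΘvtx_left n (by omega)]
  · -- case `f ≥ 1`, mirror
    set f := N₀ - c with hf
    have hf1 : 1 ≤ f := by omega
    have hcf : N₀ = c + f := by omega
    have hkey2 : ∀ i, S.label i = R.label (f + i) := by
      intro i
      have h1 : S.label (i + c * L) = S.label i := hSperL.multi i c
      have hc1 : 1 ≤ c := by rw [hc]; omega
      have hNL : c ≤ c * L := Nat.le_mul_of_pos_right _ (by omega)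
      have h2 : i + c * L = c + (i + c * L - c) := by omega
      have h3 : N₀ + (i + c * L - c) = (f + i) + c * L := by omega
      rw [← h1, h2, ← hkey (i + c * L - c), h3]
      exact hRperL.multi (f + i) c
    have halign : ∀ s, Θ.vtx s = R.vtx (f + s) := by
      intro s
      set M := s + c + 1 with hM
      have hMne : M ≠ 0 := by omega
      have hlabeq : (Θ.take M hMne).label = ((R.shift f).take M hMne).label := by
        refine take_label_ext Θ (R.shift f) M hMne ?_
        intro i hi
        rw [GInfPath.shift_label, hΘS, hkey2 i]
      have hrngeq : (Θ.take M hMne).rng = ((R.shift f).take M hMne).rng := by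
        rw [Θ.take_rng, (R.shift f).take_rng, GInfPath.shift_vtx]
        have h1 : M = c + (M - c) := by omega
        have h2 : N₀ + (M - c) = f + M := by omega
        conv_lhs => rw [h1]
        rw [hΘvtx_right (M - c), h2]
      have hPeq := backward_unique hwlr hsa hsing _ _ hlabeq hrngeq
      have hedge : Θ.edges s = R.edges (f + s) := by
        have h1 := congrArg (fun p => GPath.eF p s) hPeq
        rwa [Θ.take_eF M hMne s (by omega), (R.shift f).take_eF M hMne s (by omega),
          GInfPath.shift_edges] at h1
      rw [GInfPath.vtx, GInfPath.vtx, hedge]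
    have hone : (R.shift 0).vtx f = (R.shift 0).vtx 0 := by
      simp only [GInfPath.shift_vtx, Nat.zero_add]
      have h1 := halign 0
      rw [Nat.add_zero] at h1
      rw [← h1, GInfPath.vtx_zero, GInfPath.vtx_zero, hR, hΘsrc]
    have hvp := vertex_periodic hl hwlr hsa hsc hsing hnd R hR 0 f hf1 hone n
    simp only [GInfPath.shift_vtx, Nat.zero_add] at hvp
    have h2 := halign n
    rw [← Nat.add_comm n f, hvp] at h2
    rw [← h2, hΘvtx_left n (by omega)]

end Core


end LabelledGraph
namespace LabelledGraph

variable {V Ed A : Type*} {G : LabelledGraph V Ed A}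

lemma comp_vtx_boundary (p : G.GPath) (q : G.GInfPath) (h) :
    (GInfPath.comp p q h).vtx p.len = q.src := by
  have := GInfPath.comp_vtx_right p q h 0
  rwa [Nat.add_zero, GInfPath.vtx_zero] at this

end LabelledGraph
/-- In a weakly left-resolving, strongly cofinal labelled space
`(E,𝓛,Ē^{0,-})` with all singletons in `Ē^{0,-}`, if `[v]_l` is not disagreeable
then `|r({v},α)| = 1` for every `α ∈ 𝓛(vE^{≥1})`. -/
theorem not_disagreeable_implies_singleton_relRange
    {V Ed A : Type*} [Countable A] (G : LabelledGraph V Ed A)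
    (hacc : G.Accommodating G.barE)
    (hwlr : G.WeaklyLeftResolving G.barE)
    (hsa : G.StandingAssumptions G.barE)
    (hsc : G.StronglyCofinal)
    (hsing : ∀ w : V, ({w} : Set V) ∈ G.barE)
    (v : V) (l : ℕ) (hl : 1 ≤ l)
    (h : ¬ G.DisagreeableVtx l v) :
    ∀ α : List A, (∃ p : G.GPath, p.label = α ∧ p.src = v) →
      ∃ w : V, G.relRange {v} α = {w} := by
  classical
  intro α ⟨p, hpl, hps⟩
  refine ⟨p.rng, ?_⟩
  have hrng_eq : ∀ q : G.GPath, q.label = α → q.src = v → q.rng = p.rng := by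
    intro q hql hqs
    -- extend both paths to infinite paths
    have hqlen : q.len = p.len := by
      rw [← q.label_length, ← p.label_length, hql, hpl]
    have hns := hsa.no_sinks
    set Rq := LabelledGraph.GInfPath.comp q (LabelledGraph.arbPath hns q.rng)
      (by rw [LabelledGraph.arbPath_src]) with hRq
    set Rp := LabelledGraph.GInfPath.comp p (LabelledGraph.arbPath hns p.rng)
      (by rw [LabelledGraph.arbPath_src]) with hRp
    have hRqsrc : Rq.src = v := by rw [hRq, LabelledGraph.GInfPath.comp_src, hqs]
    have hRpsrc : Rp.src = v := by rw [hRp, LabelledGraph.GInfPath.comp_src, hps]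
    have hmain := LabelledGraph.main_pair hl hwlr hsa hsc hsing h Rq Rp hRqsrc hRpsrc p.len
    rw [hRq, hRp] at hmain
    have e1 := LabelledGraph.comp_vtx_boundary q (LabelledGraph.arbPath hns q.rng)
      (by rw [LabelledGraph.arbPath_src])
    have e2 := LabelledGraph.comp_vtx_boundary p (LabelledGraph.arbPath hns p.rng)
      (by rw [LabelledGraph.arbPath_src])
    rw [hqlen] at e1
    rw [e1, e2] at hmain
    rwa [LabelledGraph.arbPath_src, LabelledGraph.arbPath_src] at hmain
  ext t
  constructor
  · rintro ⟨q, hql, hqs, hqr⟩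
    have : q.src = v := hqs
    rw [Set.mem_singleton_iff, ← hqr]
    exact hrng_eq q hql this
  · intro ht
    rw [Set.mem_singleton_iff] at ht
    subst ht
    exact ⟨p, hpl, hps, rfl⟩
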